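/- For every finite DAG G and every matching M : S → T in TC(G), there exist a positive integer k, a partition (S_1, …, S_k) of S, and a partition (T_1, …, T_k) of T, with M(S_i) = T_i for all i ∈ [k], such that: (1) the sweeping graphs are pairwise vertex-disjoint, i.e., V(H(S_i, T_i)) ∩ V(H(S_j, T_j)) = ∅ for all i ≠ j in [k]; and (2) for all i ∈ [k] and all (x, y) ∈ S_i × T_i with x ≺ y, there exists a matching M̂ : S_i → T_i in TC(G) with (x, y) ∈ M̂. -/

import Mathlib

/-- Strict reachability in a DAG with edge relation `E`. -/
def StrictReach {V : Type*} (E : V → V → Prop) (x y : V) : Prop :=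
  Relation.ReflTransGen E x y ∧ x ≠ y

/-- A matching in the transitive closure of the DAG, represented as a finite set of
pairs `(s, t)` with `s ≺ t` whose endpoints are all distinct. Its set of lower
endpoints is `M.image Prod.fst` and its set of upper endpoints is `M.image Prod.snd`. -/
def IsMatching {V : Type*} (E : V → V → Prop) (M : Finset (V × V)) : Prop :=
  (∀ p ∈ M, StrictReach E p.1 p.2) ∧
  (∀ p ∈ M, ∀ q ∈ M, p ≠ q → p.1 ≠ q.1 ∧ p.1 ≠ q.2 ∧ p.2 ≠ q.1 ∧ p.2 ≠ q.2)

/-- Vertex set of the `(S,T)`-sweeping graph. -/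
def sweepV {V : Type*} (E : V → V → Prop) (S T : Finset V) : Set V :=
  {z | ∃ s ∈ S, ∃ t ∈ T, Relation.ReflTransGen E s z ∧ Relation.ReflTransGen E z t}

def stepRel {V : Type*} (E : V → V → Prop) (C : Finset (V × V)) (a b : V × V) : Prop :=
  a ∈ C ∧ b ∈ C ∧ Relation.ReflTransGen E a.1 b.2

def SConn {V : Type*} (E : V → V → Prop) (C : Finset (V × V)) : Prop :=
  ∀ p ∈ C, ∀ q ∈ C, Relation.ReflTransGen (stepRel E C) p q

lemma escape {α : Type*} [DecidableEq α] {r : α → α → Prop} {p : α} (A : Finset α)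
    (hp : p ∉ A) : ∀ {q : α}, Relation.ReflTransGen r q p → q ∈ A →
    ∃ a ∈ A, ∃ b, b ∉ A ∧ r a b := by
  intro q h
  induction h using Relation.ReflTransGen.head_induction_on with
  | refl => exact fun hq => absurd hq hp
  | @head a c h' _ ih =>
    intro hq
    by_cases hc : c ∈ A
    · exact ih hc
    · exact ⟨a, hq, c, hc, h'⟩

lemma rearrange {V : Type*} [Fintype V] [DecidableEq V] (E : V → V → Prop)
    (M : Finset (V × V)) (hM : IsMatching E M) (C : Finset (V × V)) (hCM : C ⊆ M)
    (hSC : SConn E C) (p q : V × V) (hp : p ∈ C) (hq : q ∈ C)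
    (hxy : StrictReach E p.1 q.2) :
    ∃ M' : Finset (V × V), IsMatching E M' ∧ (p.1, q.2) ∈ M' ∧
      M'.image Prod.fst = C.image Prod.fst ∧ M'.image Prod.snd = C.image Prod.snd := by
  classical
  have fact1 : ∀ u ∈ M, StrictReach E u.1 u.2 := hM.1
  have fact2 : ∀ u ∈ M, ∀ w ∈ M, u.1 = w.1 → u = w := by
    intro u hu w hw h
    by_contra hne
    exact (hM.2 u hu w hw hne).1 h
  have fact3 : ∀ u ∈ M, ∀ w ∈ M, u.2 = w.2 → u = w := by
    intro u hu w hw h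
    by_contra hne
    exact (hM.2 u hu w hw hne).2.2.2 h
  have fact4 : ∀ u ∈ M, ∀ w ∈ M, u.1 ≠ w.2 := by
    intro u hu w hw
    by_cases h : u = w
    · subst h; exact (hM.1 u hu).2
    · exact (hM.2 u hu w hw h).2.1
  by_cases hpq : p = q
  · subst hpq
    refine ⟨C, ⟨fun r hr => fact1 r (hCM hr), fun r hr s hs h => hM.2 r (hCM hr) s (hCM hs) h⟩,
      ?_, rfl, rfl⟩
    simpa [Prod.mk.eta] using hp
  · -- Hall's theorem setup
    set t : {a // a ∈ C.erase p} → Finset (V × V) :=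
      fun a => (C.erase q).filter (fun b => Relation.ReflTransGen E (a : V × V).1 b.2) with ht
    have hall : ∀ s : Finset {a // a ∈ C.erase p}, s.card ≤ (s.biUnion t).card := by
      intro s
      set A : Finset (V × V) := s.image Subtype.val with hA
      have hAcard : A.card = s.card := Finset.card_image_of_injective _ Subtype.val_injective
      have hAsub : A ⊆ C.erase p := by
        intro b hb
        rcases Finset.mem_image.1 hb with ⟨a, _, rfl⟩
        exact a.2
      have hsub1 : A.erase q ⊆ s.biUnion t := by
        intro b hb
        have hbq : b ≠ q := Finset.ne_of_mem_erase hb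
        have hbA : b ∈ A := Finset.mem_of_mem_erase hb
        have hbC : b ∈ C := Finset.mem_of_mem_erase (hAsub hbA)
        rcases Finset.mem_image.1 hbA with ⟨a, ha, rfl⟩
        refine Finset.mem_biUnion.2 ⟨a, ha, Finset.mem_filter.2
          ⟨Finset.mem_erase.2 ⟨hbq, hbC⟩, (fact1 _ (hCM hbC)).1⟩⟩
      by_cases hqA : q ∈ A
      · have hpA : p ∉ A := fun h => (Finset.mem_erase.1 (hAsub h)).1 rfl
        obtain ⟨a, haA, b, hbA, hstep⟩ := escape A hpA (hSC q hq p hp) hqA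
        rcases Finset.mem_image.1 haA with ⟨a', ha's, rfl⟩
        have hbB : b ∈ s.biUnion t := Finset.mem_biUnion.2 ⟨a', ha's, Finset.mem_filter.2
          ⟨Finset.mem_erase.2 ⟨fun h => hbA (h ▸ hqA), hstep.2.1⟩, hstep.2.2⟩⟩
        have hins : insert b (A.erase q) ⊆ s.biUnion t := Finset.insert_subset hbB hsub1
        have hcard := Finset.card_le_card hins
        rw [Finset.card_insert_of_notMem (fun h => hbA (Finset.mem_of_mem_erase h)),
          Finset.card_erase_of_mem hqA] at hcard
        have hApos : 0 < A.card := Finset.card_pos.2 ⟨q, hqA⟩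
        omega
      · have : A ⊆ s.biUnion t := by
          rw [← Finset.erase_eq_of_notMem hqA]; exact hsub1
        calc s.card = A.card := hAcard.symm
          _ ≤ _ := Finset.card_le_card this
    obtain ⟨f, hfinj, hft⟩ := (Finset.all_card_le_biUnion_card_iff_exists_injective t).1 hall
    have hfC : ∀ a : {a // a ∈ C.erase p}, f a ∈ C.erase q := fun a => (Finset.mem_filter.1 (hft a)).1
    have hfR : ∀ a : {a // a ∈ C.erase p}, Relation.ReflTransGen E (a : V × V).1 (f a).2 :=
      fun a => (Finset.mem_filter.1 (hft a)).2
    have hImage : Finset.univ.image f = C.erase q := by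
      refine Finset.eq_of_subset_of_card_le ?_ ?_
      · intro b hb
        rcases Finset.mem_image.1 hb with ⟨a, _, rfl⟩
        exact hfC a
      · rw [Finset.card_image_of_injective _ hfinj, Finset.card_univ, Fintype.card_coe,
          Finset.card_erase_of_mem hp, Finset.card_erase_of_mem hq]
    set g : {a // a ∈ C.erase p} → V × V := fun a => ((a : V × V).1, (f a).2) with hg
    set M' : Finset (V × V) := insert (p.1, q.2) (Finset.univ.image g) with hM'
    have hmemC : ∀ a : {a // a ∈ C.erase p}, (a : V × V) ∈ C :=
      fun a => Finset.mem_of_mem_erase a.2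
    have hfCC : ∀ a : {a // a ∈ C.erase p}, f a ∈ C := fun a => Finset.mem_of_mem_erase (hfC a)
    have h_elem : ∀ r ∈ M', ∃ u, u ∈ C ∧ ∃ w, w ∈ C ∧ r = (u.1, w.2) ∧
        Relation.ReflTransGen E u.1 w.2 := by
      intro r hr
      rcases Finset.mem_insert.1 hr with h | h
      · exact ⟨p, hp, q, hq, h, hxy.1⟩
      · rcases Finset.mem_image.1 h with ⟨a, _, rfl⟩
        exact ⟨a, hmemC a, f a, hfCC a, rfl, hfR a⟩
    have h_inj1 : ∀ r ∈ M', ∀ r' ∈ M', r.1 = r'.1 → r = r' := by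
      intro r hr r' hr' h
      rcases Finset.mem_insert.1 hr with h1 | h1 <;> rcases Finset.mem_insert.1 hr' with h2 | h2
      · rw [h1, h2]
      · exfalso
        rcases Finset.mem_image.1 h2 with ⟨a, _, rfl⟩
        subst h1
        have : p = (a : V × V) := fact2 p (hCM hp) _ (hCM (hmemC a)) h
        exact (Finset.mem_erase.1 a.2).1 this.symm
      · exfalso
        rcases Finset.mem_image.1 h1 with ⟨a, _, rfl⟩
        subst h2
        have : (a : V × V) = p := fact2 _ (hCM (hmemC a)) p (hCM hp) h
        exact (Finset.mem_erase.1 a.2).1 this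
      · rcases Finset.mem_image.1 h1 with ⟨a, _, rfl⟩
        rcases Finset.mem_image.1 h2 with ⟨a', _, rfl⟩
        have : (a : V × V) = (a' : V × V) := fact2 _ (hCM (hmemC a)) _ (hCM (hmemC a')) h
        rw [Subtype.ext this]
    have h_inj2 : ∀ r ∈ M', ∀ r' ∈ M', r.2 = r'.2 → r = r' := by
      intro r hr r' hr' h
      rcases Finset.mem_insert.1 hr with h1 | h1 <;> rcases Finset.mem_insert.1 hr' with h2 | h2
      · rw [h1, h2]
      · exfalso
        rcases Finset.mem_image.1 h2 with ⟨a, _, rfl⟩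
        subst h1
        have : q = f a := fact3 q (hCM hq) _ (hCM (hfCC a)) h
        exact (Finset.mem_erase.1 (hfC a)).1 this.symm
      · exfalso
        rcases Finset.mem_image.1 h1 with ⟨a, _, rfl⟩
        subst h2
        have : f a = q := fact3 _ (hCM (hfCC a)) q (hCM hq) h
        exact (Finset.mem_erase.1 (hfC a)).1 this
      · rcases Finset.mem_image.1 h1 with ⟨a, _, rfl⟩
        rcases Finset.mem_image.1 h2 with ⟨a', _, rfl⟩
        have : f a = f a' := fact3 _ (hCM (hfCC a)) _ (hCM (hfCC a')) h
        rw [hfinj this]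
    refine ⟨M', ⟨?_, ?_⟩, Finset.mem_insert_self _ _, ?_, ?_⟩
    · intro r hr
      obtain ⟨u, hu, w, hw, hruw, hRuw⟩ := h_elem r hr
      rw [hruw]
      exact ⟨hRuw, fact4 u (hCM hu) w (hCM hw)⟩
    · intro r hr r' hr' hne
      obtain ⟨u, hu, w, hw, hruw, _⟩ := h_elem r hr
      obtain ⟨u', hu', w', hw', hruw', _⟩ := h_elem r' hr'
      refine ⟨fun h => hne (h_inj1 r hr r' hr' h), ?_, ?_, fun h => hne (h_inj2 r hr r' hr' h)⟩
      · rw [hruw, hruw']; exact fact4 u (hCM hu) w' (hCM hw')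
      · rw [hruw, hruw']; exact fun h => fact4 u' (hCM hu') w (hCM hw) h.symm
    · ext v
      simp only [Finset.mem_image]
      constructor
      · rintro ⟨r, hr, rfl⟩
        obtain ⟨u, hu, w, hw, hruw, _⟩ := h_elem r hr
        exact ⟨u, hu, by rw [hruw]⟩
      · rintro ⟨c, hc, rfl⟩
        by_cases hcp : c = p
        · exact ⟨(p.1, q.2), Finset.mem_insert_self _ _, by rw [hcp]⟩
        · refine ⟨g ⟨c, Finset.mem_erase.2 ⟨hcp, hc⟩⟩, ?_, rfl⟩
          exact Finset.mem_insert.2 (Or.inr (Finset.mem_image.2 ⟨_, Finset.mem_univ _, rfl⟩))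
    · ext v
      simp only [Finset.mem_image]
      constructor
      · rintro ⟨r, hr, rfl⟩
        obtain ⟨u, hu, w, hw, hruw, _⟩ := h_elem r hr
        exact ⟨w, hw, by rw [hruw]⟩
      · rintro ⟨c, hc, rfl⟩
        by_cases hcq : c = q
        · exact ⟨(p.1, q.2), Finset.mem_insert_self _ _, by rw [hcq]⟩
        · have : c ∈ Finset.univ.image f := by
            rw [hImage]; exact Finset.mem_erase.2 ⟨hcq, hc⟩
          rcases Finset.mem_image.1 this with ⟨a, _, rfl⟩
          refine ⟨g a, ?_, rfl⟩
          exact Finset.mem_insert.2 (Or.inr (Finset.mem_image.2 ⟨_, Finset.mem_univ _, rfl⟩))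

def PartInv {V : Type*} (E : V → V → Prop) (M : Finset (V × V))
    (P : Finset (Finset (V × V))) : Prop :=
  (∀ C ∈ P, C ⊆ M ∧ SConn E C) ∧
  (∀ C ∈ P, ∀ D ∈ P, C ≠ D → Disjoint C D) ∧
  (∀ r : V × V, r ∈ M ↔ ∃ C ∈ P, r ∈ C)

lemma partition_reduce {V : Type*} [Fintype V] [DecidableEq V] (E : V → V → Prop)
    (M : Finset (V × V)) :
    ∀ n (P : Finset (Finset (V × V))), PartInv E M P → P.card ≤ n →
    ∃ P', PartInv E M P' ∧ ∀ C ∈ P', ∀ D ∈ P', C ≠ D →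
      Disjoint (sweepV E (C.image Prod.fst) (C.image Prod.snd))
               (sweepV E (D.image Prod.fst) (D.image Prod.snd)) := by
  intro n
  induction n with
  | zero =>
    intro P hInv hcard
    refine ⟨P, hInv, ?_⟩
    intro C hC
    exact absurd (Finset.card_pos.2 ⟨C, hC⟩) (by omega)
  | succ n ih =>
    intro P hInv hcard
    by_cases hgood : ∀ C ∈ P, ∀ D ∈ P, C ≠ D →
        Disjoint (sweepV E (C.image Prod.fst) (C.image Prod.snd))
                 (sweepV E (D.image Prod.fst) (D.image Prod.snd))
    · exact ⟨P, hInv, hgood⟩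
    · push_neg at hgood
      obtain ⟨C, hC, D, hD, hne, hint⟩ := hgood
      rw [Set.not_disjoint_iff] at hint
      obtain ⟨z, hz1, hz2⟩ := hint
      obtain ⟨s, hs, t0, ht0, hsz, hzt⟩ := hz1
      obtain ⟨s', hs', t0', ht0', hsz', hzt'⟩ := hz2
      rcases Finset.mem_image.1 hs with ⟨p, hp, rfl⟩
      rcases Finset.mem_image.1 ht0 with ⟨q, hq, rfl⟩
      rcases Finset.mem_image.1 hs' with ⟨p', hp', rfl⟩
      rcases Finset.mem_image.1 ht0' with ⟨q', hq', rfl⟩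
      -- cross edges
      have edge1 : stepRel E (C ∪ D) p q' :=
        ⟨Finset.mem_union_left _ hp, Finset.mem_union_right _ hq', hsz.trans hzt'⟩
      have edge2 : stepRel E (C ∪ D) p' q :=
        ⟨Finset.mem_union_right _ hp', Finset.mem_union_left _ hq, hsz'.trans hzt⟩
      have hSCC := (hInv.1 C hC).2
      have hSCD := (hInv.1 D hD).2
      have monoC : ∀ a b, stepRel E C a b → stepRel E (C ∪ D) a b :=
        fun a b h => ⟨Finset.mem_union_left _ h.1, Finset.mem_union_left _ h.2.1, h.2.2⟩
      have monoD : ∀ a b, stepRel E D a b → stepRel E (C ∪ D) a b :=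
        fun a b h => ⟨Finset.mem_union_right _ h.1, Finset.mem_union_right _ h.2.1, h.2.2⟩
      have liftC : ∀ a ∈ C, ∀ b ∈ C, Relation.ReflTransGen (stepRel E (C ∪ D)) a b :=
        fun a ha b hb => Relation.ReflTransGen.mono monoC a b (hSCC a ha b hb)
      have liftD : ∀ a ∈ D, ∀ b ∈ D, Relation.ReflTransGen (stepRel E (C ∪ D)) a b :=
        fun a ha b hb => Relation.ReflTransGen.mono monoD a b (hSCD a ha b hb)
      have hSCU : SConn E (C ∪ D) := by
        intro a ha b hb
        rcases Finset.mem_union.1 ha with haC | haD <;> rcases Finset.mem_union.1 hb with hbC | hbD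
        · exact liftC a haC b hbC
        · exact (liftC a haC p hp).trans ((Relation.ReflTransGen.single edge1).trans
            (liftD q' hq' b hbD))
        · exact (liftD a haD p' hp').trans ((Relation.ReflTransGen.single edge2).trans
            (liftC q hq b hbC))
        · exact liftD a haD b hbD
      set P' : Finset (Finset (V × V)) := insert (C ∪ D) ((P.erase C).erase D) with hP'
      have hmem' : ∀ X ∈ (P.erase C).erase D, X ∈ P ∧ X ≠ C ∧ X ≠ D := by
        intro X hX
        have h1 := Finset.mem_erase.1 hX
        have h2 := Finset.mem_erase.1 h1.2
        exact ⟨h2.2, h2.1, h1.1⟩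
      have hInv' : PartInv E M P' := by
        refine ⟨?_, ?_, ?_⟩
        · intro X hX
          rcases Finset.mem_insert.1 hX with rfl | hX
          · exact ⟨Finset.union_subset (hInv.1 C hC).1 (hInv.1 D hD).1, hSCU⟩
          · exact hInv.1 X (hmem' X hX).1
        · intro X hX Y hY hXY
          rcases Finset.mem_insert.1 hX with rfl | hX <;>
            rcases Finset.mem_insert.1 hY with rfl | hY
          · exact absurd rfl hXY
          · obtain ⟨hYP, hYC, hYD⟩ := hmem' Y hY
            exact Finset.disjoint_union_left.2
              ⟨hInv.2.1 C hC Y hYP (Ne.symm hYC), hInv.2.1 D hD Y hYP (Ne.symm hYD)⟩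
          · obtain ⟨hXP, hXC, hXD⟩ := hmem' X hX
            exact Finset.disjoint_union_right.2
              ⟨hInv.2.1 X hXP C hC hXC, hInv.2.1 X hXP D hD hXD⟩
          · exact hInv.2.1 X (hmem' X hX).1 Y (hmem' Y hY).1 hXY
        · intro r
          rw [hInv.2.2 r]
          constructor
          · rintro ⟨X, hX, hrX⟩
            by_cases hXC : X = C
            · exact ⟨C ∪ D, Finset.mem_insert_self _ _,
                Finset.mem_union_left _ (hXC ▸ hrX)⟩
            · by_cases hXD : X = D
              · exact ⟨C ∪ D, Finset.mem_insert_self _ _,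
                  Finset.mem_union_right _ (hXD ▸ hrX)⟩
              · exact ⟨X, Finset.mem_insert.2 (Or.inr (Finset.mem_erase.2
                  ⟨hXD, Finset.mem_erase.2 ⟨hXC, hX⟩⟩)), hrX⟩
          · rintro ⟨X, hX, hrX⟩
            rcases Finset.mem_insert.1 hX with rfl | hX
            · rcases Finset.mem_union.1 hrX with h | h
              · exact ⟨C, hC, h⟩
              · exact ⟨D, hD, h⟩
            · exact ⟨X, (hmem' X hX).1, hrX⟩
      have hDC : D ∈ P.erase C := Finset.mem_erase.2 ⟨hne.symm, hD⟩
      have hcard2 : 2 ≤ P.card := Finset.one_lt_card.2 ⟨C, hC, D, hD, hne⟩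
      have hcard' : P'.card ≤ n := by
        have h1 : P'.card ≤ ((P.erase C).erase D).card + 1 := Finset.card_insert_le _ _
        rw [Finset.card_erase_of_mem hDC, Finset.card_erase_of_mem hC] at h1
        omega
      exact ih P' hInv' hcard'

/-- Matching decomposition lemma for DAGs: any matching `M` in `TC(G)` can be split into
parts `Ms i` (inducing partitions `S_i = (Ms i).image Prod.fst` of `S` and
`T_i = (Ms i).image Prod.snd` of `T` with `M(S_i) = T_i`) whose sweeping graphs are
pairwise vertex-disjoint and which satisfy the matching rearrangement property. -/
theorem matching_decomposition {V : Type*} [Fintype V] [DecidableEq V] (E : V → V → Prop)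
    (hacyc : ∀ x y : V, Relation.ReflTransGen E x y → Relation.ReflTransGen E y x → x = y)
    (M : Finset (V × V)) (hM : IsMatching E M) :
    ∃ (k : ℕ), 1 ≤ k ∧ ∃ Ms : Fin k → Finset (V × V),
      -- the `Ms i` partition `M` (hence `M(S_i) = T_i` for all `i`)
      (∀ i j : Fin k, i ≠ j → Disjoint (Ms i) (Ms j)) ∧
      (∀ p : V × V, p ∈ M ↔ ∃ i : Fin k, p ∈ Ms i) ∧
      -- (1) sweeping graph disjointness
      (∀ i j : Fin k, i ≠ j →
        Disjoint (sweepV E ((Ms i).image Prod.fst) ((Ms i).image Prod.snd))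
                 (sweepV E ((Ms j).image Prod.fst) ((Ms j).image Prod.snd))) ∧
      -- (2) matching rearrangement property
      (∀ i : Fin k, ∀ x ∈ (Ms i).image Prod.fst, ∀ y ∈ (Ms i).image Prod.snd,
        StrictReach E x y →
          ∃ M' : Finset (V × V), IsMatching E M' ∧ (x, y) ∈ M' ∧
            M'.image Prod.fst = (Ms i).image Prod.fst ∧
            M'.image Prod.snd = (Ms i).image Prod.snd) := by
  classical
  -- initial partition into singletons
  set P₀ : Finset (Finset (V × V)) := M.image (fun r => {r}) with hP₀
  have hInv₀ : PartInv E M P₀ := by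
    refine ⟨?_, ?_, ?_⟩
    · intro C hC
      rcases Finset.mem_image.1 hC with ⟨r, hr, rfl⟩
      refine ⟨Finset.singleton_subset_iff.2 hr, ?_⟩
      intro a ha b hb
      rw [Finset.mem_singleton] at ha hb
      rw [ha, hb]
    · intro C hC D hD hne
      rcases Finset.mem_image.1 hC with ⟨r, _, rfl⟩
      rcases Finset.mem_image.1 hD with ⟨r', _, rfl⟩
      rw [Finset.disjoint_singleton]
      exact fun h => hne (by rw [h])
    · intro r
      constructor
      · intro hr
        exact ⟨{r}, Finset.mem_image.2 ⟨r, hr, rfl⟩, Finset.mem_singleton_self r⟩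
      · rintro ⟨C, hC, hrC⟩
        rcases Finset.mem_image.1 hC with ⟨r', hr', rfl⟩
        rw [Finset.mem_singleton] at hrC
        rw [hrC]; exact hr'
  obtain ⟨P, hInv, hsweep⟩ := partition_reduce E M P₀.card P₀ hInv₀ le_rfl
  by_cases hP : P = ∅
  · refine ⟨1, le_refl 1, fun _ => ∅, ?_, ?_, ?_, ?_⟩
    · intro i j _; simp
    · intro r
      constructor
      · intro hr
        rcases (hInv.2.2 r).1 hr with ⟨C, hC, _⟩
        rw [hP] at hC
        exact absurd hC (Finset.notMem_empty C)
      · rintro ⟨i, hi⟩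
        exact absurd hi (Finset.notMem_empty _)
    · intro i j hij
      exact absurd (Subsingleton.elim i j) hij
    · intro i x hx
      simp at hx
  · refine ⟨P.card, Finset.card_pos.2 (Finset.nonempty_iff_ne_empty.2 hP), ?_⟩
    set Ms : Fin P.card → Finset (V × V) := fun i => ((P.equivFin.symm i : {x // x ∈ P}) : Finset (V × V)) with hMs
    have MsMem : ∀ i, Ms i ∈ P := fun i => (P.equivFin.symm i).2
    have MsNe : ∀ i j, i ≠ j → Ms i ≠ Ms j := by
      intro i j hij h
      exact hij (P.equivFin.symm.injective (Subtype.ext h))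
    refine ⟨Ms, ?_, ?_, ?_, ?_⟩
    · intro i j hij
      exact hInv.2.1 _ (MsMem i) _ (MsMem j) (MsNe i j hij)
    · intro r
      rw [hInv.2.2 r]
      constructor
      · rintro ⟨C, hC, hrC⟩
        refine ⟨P.equivFin ⟨C, hC⟩, ?_⟩
        have : Ms (P.equivFin ⟨C, hC⟩) = C := by
          rw [hMs]
          simp only [Equiv.symm_apply_apply]
        rw [this]; exact hrC
      · rintro ⟨i, hi⟩
        exact ⟨Ms i, MsMem i, hi⟩
    · intro i j hij
      exact hsweep _ (MsMem i) _ (MsMem j) (MsNe i j hij)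
    · intro i x hx y hy hxy
      rcases Finset.mem_image.1 hx with ⟨p, hp, rfl⟩
      rcases Finset.mem_image.1 hy with ⟨q, hq, rfl⟩
      exact rearrange E M hM (Ms i) (hInv.1 _ (MsMem i)).1 (hInv.1 _ (MsMem i)).2
        p q hp hq hxy
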